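/- Let C be cocomplete and cowellpowered with an (E,M)-factorisation system in which E consists of epimorphisms, and suppose Σ : C → C preserves E-cointersections. Let (Q,δ,i,o) be a Σ-tree automaton with o ∈ E, and let (Q',δ',i',o') together with q : Q ↠ Q' in E be a quotient automaton of (Q,δ,i,o). Then (Q',δ',i',o') is simple if and only if it is the minimisation of (Q,δ,i,o). -/

import Mathlib

open CategoryTheory CategoryTheory.Limits

universe v u

namespace TreeAutPaper

variable {C : Type u} [Category.{v} C]

/-- A representative of a quotient of `X` lying in the class `E`:
an epimorphism out of `X` belonging to `E`. -/
structure EQuot (E : MorphismProperty C) (X : C) where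
  obj : C
  hom : X ⟶ obj
  epi : Epi hom
  mem : E hom

/-- The order on quotients: `q ≤ r` iff `r = h ∘ q` for some `h`. -/
def EQuot.le {E : MorphismProperty C} {X : C} (q r : EQuot E X) : Prop :=
  ∃ h : q.obj ⟶ r.obj, q.hom ≫ h = r.hom

/-- Two quotient representatives are equivalent when each is below the other. -/
def EQuot.equiv {E : MorphismProperty C} {X : C} (q r : EQuot E X) : Prop :=
  q.le r ∧ r.le q

/-- `C` is cowellpowered: quotients (epimorphisms out of an object, up to equivalence)
of every object form a set (an essentially `v`-small collection). -/
def Cowellpowered (C : Type u) [Category.{v} C] : Prop :=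
  ∀ X : C, Small.{v} (Quot (fun q r : EQuot (⊤ : MorphismProperty C) X => EQuot.equiv q r))

/-- An `(E,M)`-factorisation system: both classes are closed under composition with
isomorphisms, every morphism factors as an `E`-morphism followed by an `M`-morphism, and
we have a unique diagonal fill-in property. -/
structure IsFactorizationSystem (E M : MorphismProperty C) : Prop where
  respectsIso_E : E.RespectsIso
  respectsIso_M : M.RespectsIso
  factor : ∀ {X Y : C} (f : X ⟶ Y), ∃ (Z : C) (e : X ⟶ Z) (m : Z ⟶ Y), E e ∧ M m ∧ e ≫ m = f
  diag : ∀ {A B X Y : C} (e : A ⟶ B) (m : X ⟶ Y) (f : A ⟶ X) (g : B ⟶ Y),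
    E e → M m → f ≫ m = e ≫ g → ∃! d : B ⟶ X, e ≫ d = f ∧ d ≫ m = g

/-- `S` preserves `E`-cointersections, i.e. wide pushouts of families of epimorphisms
lying in `E`. -/
def PreservesECointersections (E : MorphismProperty C) (S : C ⥤ C) : Prop :=
  ∀ (J : Type (max u v)) (X : C) (objs : J → C) (arrows : ∀ j : J, X ⟶ objs j),
    (∀ j, E (arrows j)) → (∀ j, Epi (arrows j)) →
    ∀ c : Cocone (WidePushoutShape.wideSpan X objs arrows),
      Nonempty (IsColimit c) → Nonempty (IsColimit (S.mapCocone c))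

/-- `f : ΣX ⟶ Y` factors through (the image under `Σ` of) the quotient `q`. -/
def FactorsThru {E : MorphismProperty C} (S : C ⥤ C) {X Y : C} (f : S.obj X ⟶ Y)
    (q : EQuot E X) : Prop :=
  ∃ g : S.obj q.obj ⟶ Y, S.map q.hom ≫ g = f

/-- `q` is the `E`-cobase of `f : ΣX ⟶ Y`: the greatest quotient of `X` in `E`
through whose `Σ`-image `f` factors. -/
def IsCobase (E : MorphismProperty C) (S : C ⥤ C) {X Y : C} (f : S.obj X ⟶ Y)
    (q : EQuot E X) : Prop :=
  FactorsThru S f q ∧ ∀ r : EQuot E X, FactorsThru S f r → r.le q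

variable (Sg : C ⥤ C)

/-- A `Σ`-tree automaton over input object `I` and output object `O`. -/
structure TreeAut (I O : C) where
  Q : Endofunctor.Algebra Sg
  i : I ⟶ Q.a
  o : Q.a ⟶ O

variable {Sg} {I O : C}

/-- `h` is a homomorphism of automata from `A` to `B`. -/
structure IsAutHom (A B : TreeAut Sg I O) (h : A.Q.a ⟶ B.Q.a) : Prop where
  alg : Sg.map h ≫ B.Q.str = A.Q.str ≫ h
  hi : A.i ≫ h = B.i
  ho : h ≫ B.o = A.o

/-- `(B, q)` is a quotient automaton of `A`: `q` is an epimorphism lying in `E`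
which is a homomorphism of automata. -/
structure IsQuotAut (E : MorphismProperty C) (A B : TreeAut Sg I O)
    (q : A.Q.a ⟶ B.Q.a) : Prop where
  isHom : IsAutHom A B q
  epi : Epi q
  mem : E q

/-- `(M, qm)` is the minimisation of `A`: a quotient automaton through which every
quotient automaton of `A` factors by a (necessarily unique) automaton homomorphism. -/
def IsMinimisation (E : MorphismProperty C) (A M : TreeAut Sg I O)
    (qm : A.Q.a ⟶ M.Q.a) : Prop :=
  IsQuotAut E A M qm ∧
    ∀ (B : TreeAut Sg I O) (q' : A.Q.a ⟶ B.Q.a), IsQuotAut E A B q' →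
      ∃! h : B.Q.a ⟶ M.Q.a, IsAutHom B M h ∧ q' ≫ h = qm

/-- `A` is simple: every quotient automaton of `A` has its quotient map an isomorphism. -/
def IsSimple (E : MorphismProperty C) (A : TreeAut Sg I O) : Prop :=
  ∀ (B : TreeAut Sg I O) (q : A.Q.a ⟶ B.Q.a), IsQuotAut E A B q → IsIso q

section Varietor

variable (Fr : C ⥤ Endofunctor.Algebra Sg) (adj : Fr ⊣ Endofunctor.Algebra.forget Sg)

/-- The reachability map of an automaton: the underlying morphism of the adjoint
transpose of the initial-state assignment. -/
def rch (A : TreeAut Sg I O) : (Fr.obj I).a ⟶ A.Q.a :=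
  ((adj.homEquiv I A.Q).symm A.i).f

/-- The language of an automaton. -/
def lang (A : TreeAut Sg I O) : (Fr.obj I).a ⟶ O :=
  rch Fr adj A ≫ A.o

/-- The automaton `(Σ◇I, α_I, η_I, L)` on the free `Σ`-algebra over `I`. -/
def freeAut (L : (Fr.obj I).a ⟶ O) : TreeAut Sg I O :=
  { Q := Fr.obj I
    i := adj.unit.app I
    o := L }

/-- `A` is reachable: its reachability map lies in `E`. -/
def Reachable (E : MorphismProperty C) (A : TreeAut Sg I O) : Prop :=
  E (rch Fr adj A)

/-- `A` is minimal: reachable, and every reachable automaton with the same language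
admits a (necessarily unique) automaton homomorphism into `A`. -/
def Minimal (E : MorphismProperty C) (A : TreeAut Sg I O) : Prop :=
  Reachable Fr adj E A ∧
    ∀ B : TreeAut Sg I O, Reachable Fr adj E B → lang Fr adj B = lang Fr adj A →
      ∃! h : B.Q.a ⟶ A.Q.a, IsAutHom B A h

end Varietor


universe w

/-- Case analysis helper for `ULift Bool`. -/
def boolRec {motive : ULift.{w} Bool → Sort*} (t : motive ⟨true⟩) (f : motive ⟨false⟩) :
    ∀ j : ULift.{w} Bool, motive j
  | ⟨true⟩ => t
  | ⟨false⟩ => f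

/-- A morphism having the (existence part of the) left lifting property against all of `M`
lies in `E`. -/
lemma mem_of_llp {C : Type u} [Category.{v} C] {E M : MorphismProperty C}
    (hfs : IsFactorizationSystem E M)
    (hE : ∀ ⦃X Y : C⦄ (f : X ⟶ Y), E f → Epi f) {X Y : C} (f : X ⟶ Y)
    (hllp : ∀ {U V : C} (m : U ⟶ V) (u : X ⟶ U) (v : Y ⟶ V), M m → u ≫ m = f ≫ v →
      ∃ d : Y ⟶ U, f ≫ d = u ∧ d ≫ m = v) : E f := by
  obtain ⟨Z, e, m, hEe, hMm, hcomp⟩ := hfs.factor f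
  obtain ⟨d, hd1, hd2⟩ := hllp m e (𝟙 Y) hMm (by simp [← hcomp])
  have he : Epi e := hE e hEe
  have hmd : m ≫ d = 𝟙 Z := by
    apply he.left_cancellation
    rw [← Category.assoc, hcomp, hd1, Category.comp_id]
  haveI : IsIso m := ⟨d, hmd, hd2⟩
  letI : E.RespectsIso := hfs.respectsIso_E
  rw [← hcomp]
  exact MorphismProperty.RespectsIso.postcomp E m e hEe

/-- `E` is closed under composition. -/
lemma comp_mem {C : Type u} [Category.{v} C] {E M : MorphismProperty C}
    (hfs : IsFactorizationSystem E M)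
    (hE : ∀ ⦃X Y : C⦄ (f : X ⟶ Y), E f → Epi f) {X Y Z : C} {f : X ⟶ Y} {g : Y ⟶ Z}
    (hf : E f) (hg : E g) : E (f ≫ g) := by
  apply mem_of_llp hfs hE
  intro U V m u v hMm hsq
  obtain ⟨d1, ⟨hd1a, hd1b⟩, -⟩ := hfs.diag f m u (g ≫ v) hf hMm (by rw [hsq, Category.assoc])
  obtain ⟨d2, ⟨hd2a, hd2b⟩, -⟩ := hfs.diag g m d1 v hg hMm hd1b
  exact ⟨d2, by rw [Category.assoc, hd2a, hd1a], hd2b⟩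


/-- Suppose `Σ` preserves `E`-cointersections, let `(Q,δ,i,o)` be an
automaton with `o ∈ E`, and let `(Q',δ',i',o')`, `q : Q ↠ Q'` be a quotient automaton
of it. Then `(Q',δ',i',o')` is simple iff it is the minimisation of `(Q,δ,i,o)`. -/
theorem simple_iff_minimisation
    {C : Type u} [Category.{v} C] [HasColimits C] (hcwp : Cowellpowered C)
    (E M : MorphismProperty C) (hfs : IsFactorizationSystem E M)
    (hE : ∀ ⦃X Y : C⦄ (f : X ⟶ Y), E f → Epi f)
    {Sg : C ⥤ C} (hpres : PreservesECointersections E Sg)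
    {I O : C} (A : TreeAut Sg I O) (hoE : E A.o)
    (B : TreeAut Sg I O) (q : A.Q.a ⟶ B.Q.a) (hq : IsQuotAut E A B q) :
    IsSimple E B ↔ IsMinimisation E A B q := by
  constructor
  · -- simple → minimisation
    intro hsimple
    refine ⟨hq, ?_⟩
    intro B' q' hq'
    -- the wide pushout (binary cointersection) of q and q'
    haveI : HasColimitsOfShape (WidePushoutShape (ULift.{max u v} Bool)) C :=
      hasColimitsOfShape_of_equivalence
        (WidePushoutShape.equivalenceOfEquiv (ULift.{max u v} Bool)
          ((Equiv.ulift.{v, 0} (α := Bool)).trans (Equiv.ulift.{max u v, 0} (α := Bool)).symm))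
    let objs : ULift.{max u v} Bool → C := boolRec B.Q.a B'.Q.a
    let arrows : ∀ j, A.Q.a ⟶ objs j := boolRec (motive := fun j => A.Q.a ⟶ objs j) q q'
    let D := WidePushoutShape.wideSpan A.Q.a objs arrows
    let P : C := colimit D
    let pB : B.Q.a ⟶ P := colimit.ι D (some ⟨true⟩)
    let pB' : B'.Q.a ⟶ P := colimit.ι D (some ⟨false⟩)
    have hnone : ∀ j, arrows j ≫ colimit.ι D (some j) = colimit.ι D none := fun j =>
      colimit.w D (WidePushoutShape.Hom.init j)
    have hcomm : q ≫ pB = q' ≫ pB' := (hnone ⟨true⟩).trans (hnone ⟨false⟩).symm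
    -- pB is epi
    have hepiP : Epi pB := by
      constructor
      intro W g h hgh
      apply colimit.hom_ext
      rintro (_ | ⟨_ | _⟩)
      · have e : (q ≫ pB) ≫ g = (q ≫ pB) ≫ h := by
          simp only [Category.assoc]
          exact congrArg (fun z => q ≫ z) hgh
        exact (congrArg (· ≫ g) (hnone ⟨true⟩).symm).trans (e.trans (congrArg (· ≫ h) (hnone ⟨true⟩)))
      · have : q' ≫ pB' ≫ g = q' ≫ pB' ≫ h := by
          rw [← Category.assoc, ← hcomm, ← Category.assoc, ← hcomm,
            Category.assoc, Category.assoc, hgh]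
        exact (hq'.epi).left_cancellation _ _ this
      · exact hgh
    -- pB is in E (via the lifting property)
    have hmemP : E pB := by
      apply mem_of_llp hfs hE
      intro U V m u v hMm hsq
      obtain ⟨d', ⟨hd'1, hd'2⟩, -⟩ := hfs.diag q' m (q ≫ u) (pB' ≫ v) hq'.mem hMm (by
        rw [Category.assoc, hsq, ← Category.assoc, hcomm, Category.assoc])
      have hw : ∀ j, D.map (WidePushoutShape.Hom.init j) ≫
          boolRec (motive := fun j => objs j ⟶ U) u d' j = q ≫ u := by
        rintro ⟨_ | _⟩
        · exact hd'1
        · rfl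
      let cc := WidePushoutShape.mkCocone (F := D) (q ≫ u)
        (boolRec (motive := fun j => objs j ⟶ U) u d') hw
      have h1 : colimit.ι D none ≫ colimit.desc D cc = q ≫ u := colimit.ι_desc cc none
      have h2 : pB' ≫ colimit.desc D cc = d' := colimit.ι_desc cc (some ⟨false⟩)
      have h3 : pB ≫ colimit.desc D cc = u := colimit.ι_desc cc (some ⟨true⟩)
      refine ⟨colimit.desc D cc, h3, ?_⟩
      apply colimit.hom_ext
      rintro (_ | ⟨_ | _⟩)
      · exact (Category.assoc _ _ _).symm.trans ((congrArg (· ≫ m) h1).trans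
          ((Category.assoc _ _ _).trans ((congrArg (q ≫ ·) hsq).trans
            ((Category.assoc _ _ _).symm.trans (congrArg (· ≫ v) (hnone ⟨true⟩))))))
      · exact (Category.assoc _ _ _).symm.trans ((congrArg (· ≫ m) h2).trans hd'2)
      · exact (Category.assoc _ _ _).symm.trans ((congrArg (· ≫ m) h3).trans hsq)
    -- the algebra structure on P, using that Sg preserves the cointersection
    have hEarrows : ∀ j, E (arrows j) := boolRec hq.mem hq'.mem
    have hEpiArrows : ∀ j, Epi (arrows j) := boolRec hq.epi hq'.epi
    obtain ⟨hcP⟩ := hpres (ULift.{max u v} Bool) A.Q.a objs arrows hEarrows hEpiArrows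
      (colimit.cocone D) ⟨colimit.isColimit D⟩
    let deltaCocone : Cocone (D ⋙ Sg) := WidePushoutShape.mkCocone
      (Sg.map q ≫ B.Q.str ≫ pB)
      (boolRec (motive := fun j => (D ⋙ Sg).obj (some j) ⟶ P)
        (B.Q.str ≫ pB) (B'.Q.str ≫ pB'))
      (by
        rintro ⟨_ | _⟩
        · show Sg.map q' ≫ B'.Q.str ≫ pB' = Sg.map q ≫ B.Q.str ≫ pB
          rw [← Category.assoc, hq'.isHom.alg, Category.assoc, ← hcomm,
            ← Category.assoc, ← hq.isHom.alg, Category.assoc]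
        · rfl)
    let dP : Sg.obj P ⟶ P := hcP.desc deltaCocone
    have hdPB : Sg.map pB ≫ dP = B.Q.str ≫ pB := hcP.fac deltaCocone (some ⟨true⟩)
    have hdPB' : Sg.map pB' ≫ dP = B'.Q.str ≫ pB' := hcP.fac deltaCocone (some ⟨false⟩)
    -- the output map on P
    have how : ∀ j, D.map (WidePushoutShape.Hom.init j) ≫
        boolRec (motive := fun j => objs j ⟶ O) B.o B'.o j = A.o := by
      rintro ⟨_ | _⟩
      · exact hq'.isHom.ho
      · exact hq.isHom.ho
    let oc := WidePushoutShape.mkCocone (F := D) A.o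
      (boolRec (motive := fun j => objs j ⟶ O) B.o B'.o) how
    let oP : P ⟶ O := colimit.desc D oc
    have hoPB : pB ≫ oP = B.o := colimit.ι_desc oc (some ⟨true⟩)
    have hoPB' : pB' ≫ oP = B'.o := colimit.ι_desc oc (some ⟨false⟩)
    -- the automaton on P and the quotient pB : B ↠ P
    let Paut : TreeAut Sg I O := ⟨⟨P, dP⟩, B.i ≫ pB, oP⟩
    have hquotP : IsQuotAut E B Paut pB :=
      { isHom := { alg := hdPB, hi := rfl, ho := hoPB }
        epi := hepiP
        mem := hmemP }
    haveI : IsIso pB := hsimple Paut pB hquotP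
    -- the mediating homomorphism
    refine ⟨pB' ≫ inv pB, ⟨?_, ?_⟩, ?_⟩
    · constructor
      · have hstr : B.Q.str = Sg.map pB ≫ dP ≫ inv pB := by
          rw [← Category.assoc, hdPB, Category.assoc, IsIso.hom_inv_id, Category.comp_id]
        rw [hstr, Functor.map_comp]
        simp only [Category.assoc]
        rw [← Category.assoc (Sg.map (inv pB)) (Sg.map pB), ← Functor.map_comp,
          IsIso.inv_hom_id, Sg.map_id, Category.id_comp, ← Category.assoc, hdPB',
          Category.assoc]
      · show B'.i ≫ pB' ≫ inv pB = B.i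
        have : B'.i ≫ pB' = B.i ≫ pB := by
          rw [← hq'.isHom.hi, ← hq.isHom.hi, Category.assoc, Category.assoc, hcomm]
        rw [← Category.assoc, this, Category.assoc, IsIso.hom_inv_id, Category.comp_id]
      · show (pB' ≫ inv pB) ≫ B.o = B'.o
        rw [← hoPB', ← hoPB]
        simp
    · rw [← Category.assoc, ← hcomm, Category.assoc, IsIso.hom_inv_id, Category.comp_id]
    · intro y hy
      apply (hq'.epi).left_cancellation
      rw [hy.2, ← Category.assoc, ← hcomm, Category.assoc, IsIso.hom_inv_id, Category.comp_id]
  · -- minimisation → simple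
    rintro ⟨-, hmin⟩ B'' r hr
    have hqr : IsQuotAut E A B'' (q ≫ r) :=
      { isHom :=
          { alg := by
              rw [Functor.map_comp, Category.assoc, hr.isHom.alg, ← Category.assoc,
                hq.isHom.alg, Category.assoc]
            hi := by rw [← Category.assoc, hq.isHom.hi, hr.isHom.hi]
            ho := by rw [Category.assoc, hr.isHom.ho, hq.isHom.ho] }
        epi := by haveI := hq.epi; haveI := hr.epi; exact epi_comp q r
        mem := comp_mem hfs hE hq.mem hr.mem }
    obtain ⟨h, ⟨-, hcomm⟩, -⟩ := hmin B'' (q ≫ r) hqr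
    have hrh : r ≫ h = 𝟙 _ := by
      apply (hq.epi).left_cancellation
      rw [← Category.assoc, hcomm, Category.comp_id]
    have hhr : h ≫ r = 𝟙 _ := by
      apply (hr.epi).left_cancellation
      rw [Category.comp_id, ← Category.assoc, hrh, Category.id_comp]
    exact ⟨h, hrh, hhr⟩


end TreeAutPaper
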